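/- arXiv:2102.02338 — 2 statements merged into one kernel-verified Lean document; each statement's English description precedes it below -/
import Mathlib

section
/- Let $X, Y$ be Banach spaces, $\bar{a} \in X$, $A^\dagger \in B(X,Y)$, $A \in B(Y,X)$ with $A$ injective, and $F : X \to Y$ Fréchet differentiable. Suppose $\|AF(\bar a)\|_X \le Y_0$, $\|I - AA^\dagger\|_{B(X)} \le Z_0$, $\|A(DF(\bar a) - A^\dagger)\|_{B(X)} \le Z_1$, and $\|A(DF(b) - DF(\bar a))\|_{B(X)} \le Z_2(r) r$ for all $b$ in the closed ball of radius $r$ about $\bar a$, where $Z_2$ is a polynomial with nonnegative coefficients. If $p(r_0) := Z_2(r_0) r_0^2 - (1 - Z_0 - Z_1) r_0 + Y_0 < 0$ for some $r_0 > 0$, then there exists a unique $\tilde a$ in the closed ball of radius $r_0$ around $\bar a$ with $F(\tilde a) = 0$. -/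
/-- **Radii polynomial theorem.** -/
theorem radii_polynomial_theorem
    {X Y : Type*} [NormedAddCommGroup X] [NormedSpace ℝ X] [CompleteSpace X]
    [NormedAddCommGroup Y] [NormedSpace ℝ Y] [CompleteSpace Y]
    (F : X → Y) (DF : X → X →L[ℝ] Y) (hF : ∀ x, HasFDerivAt F (DF x) x)
    (abar : X) (Adag : X →L[ℝ] Y) (A : Y →L[ℝ] X) (hA : Function.Injective A)
    (Y0 Z0 Z1 : ℝ) (hY0' : 0 ≤ Y0) (hZ0' : 0 ≤ Z0) (hZ1' : 0 ≤ Z1)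
    (Z2 : Polynomial ℝ) (hZ2 : ∀ i, 0 ≤ Z2.coeff i)
    (hY0 : ‖A (F abar)‖ ≤ Y0)
    (hZ0 : ‖ContinuousLinearMap.id ℝ X - A.comp Adag‖ ≤ Z0)
    (hZ1 : ‖A.comp (DF abar - Adag)‖ ≤ Z1)
    (hZ2b : ∀ r : ℝ, 0 < r → ∀ b ∈ Metric.closedBall abar r,
      ‖A.comp (DF b - DF abar)‖ ≤ Z2.eval r * r)
    (r0 : ℝ) (hr0 : 0 < r0)
    (hp : Z2.eval r0 * r0 ^ 2 - (1 - Z0 - Z1) * r0 + Y0 < 0) :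
    ∃! a : X, a ∈ Metric.closedBall abar r0 ∧ F a = 0 := by
  set T : X → X := fun x => x - A (F x) with hT
  set κ : ℝ := Z0 + Z1 + Z2.eval r0 * r0 with hκ
  have hZ2r : 0 ≤ Z2.eval r0 := by
    rw [Polynomial.eval_eq_sum_range]
    exact Finset.sum_nonneg fun i _ => mul_nonneg (hZ2 i) (pow_nonneg hr0.le i)
  have hκ0 : 0 ≤ κ := by positivity
  have hκr : κ * r0 + Y0 < r0 := by nlinarith
  have hκ1 : κ < 1 := by nlinarith
  -- derivative of T
  have hT_deriv : ∀ x, HasFDerivAt T (ContinuousLinearMap.id ℝ X - A.comp (DF x)) x := by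
    intro x
    exact (hasFDerivAt_id x).sub (A.hasFDerivAt.comp x (hF x))
  -- bound on derivative of T in the ball
  have hDT : ∀ x ∈ Metric.closedBall abar r0,
      ‖ContinuousLinearMap.id ℝ X - A.comp (DF x)‖ ≤ κ := by
    intro x hx
    have heq : ContinuousLinearMap.id ℝ X - A.comp (DF x)
        = (ContinuousLinearMap.id ℝ X - A.comp Adag) - A.comp (DF abar - Adag)
          - A.comp (DF x - DF abar) := by
      simp only [ContinuousLinearMap.comp_sub]
      abel
    rw [heq]
    calc ‖(ContinuousLinearMap.id ℝ X - A.comp Adag) - A.comp (DF abar - Adag)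
          - A.comp (DF x - DF abar)‖
        ≤ ‖(ContinuousLinearMap.id ℝ X - A.comp Adag) - A.comp (DF abar - Adag)‖
          + ‖A.comp (DF x - DF abar)‖ := norm_sub_le _ _
      _ ≤ ‖ContinuousLinearMap.id ℝ X - A.comp Adag‖ + ‖A.comp (DF abar - Adag)‖
          + ‖A.comp (DF x - DF abar)‖ := by
            gcongr; exact norm_sub_le _ _
      _ ≤ Z0 + Z1 + Z2.eval r0 * r0 := by
            gcongr
            exact hZ2b r0 hr0 x hx
  -- Lipschitz estimate on the ball
  have hLip : ∀ x ∈ Metric.closedBall abar r0, ∀ y ∈ Metric.closedBall abar r0,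
      ‖T y - T x‖ ≤ κ * ‖y - x‖ := by
    intro x hx y hy
    exact (convex_closedBall abar r0).norm_image_sub_le_of_norm_hasFDerivWithin_le
      (fun z hz => (hT_deriv z).hasFDerivWithinAt) hDT hx hy
  have habar : abar ∈ Metric.closedBall abar r0 := Metric.mem_closedBall_self hr0.le
  -- T maps the ball into itself
  have hmaps : ∀ x ∈ Metric.closedBall abar r0, T x ∈ Metric.closedBall abar r0 := by
    intro x hx
    rw [Metric.mem_closedBall, dist_eq_norm]
    have h1 : ‖T x - T abar‖ ≤ κ * ‖x - abar‖ := hLip abar habar x hx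
    have h2 : ‖T abar - abar‖ ≤ Y0 := by
      have : T abar - abar = -(A (F abar)) := by simp [hT]
      rw [this, norm_neg]; exact hY0
    have hxr : ‖x - abar‖ ≤ r0 := by
      rw [← dist_eq_norm]; exact hx
    calc ‖T x - abar‖ ≤ ‖T x - T abar‖ + ‖T abar - abar‖ := norm_sub_le_norm_sub_add_norm_sub _ _ _
      _ ≤ κ * ‖x - abar‖ + Y0 := add_le_add h1 h2
      _ ≤ κ * r0 + Y0 := by gcongr
      _ ≤ r0 := hκr.le
  -- set up the contraction on the subtype
  have hclosed : IsClosed (Metric.closedBall abar r0) := Metric.isClosed_closedBall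
  haveI : CompleteSpace (Metric.closedBall abar r0) := hclosed.completeSpace_coe
  haveI : Nonempty (Metric.closedBall abar r0) := ⟨⟨abar, habar⟩⟩
  set f : Metric.closedBall abar r0 → Metric.closedBall abar r0 :=
    fun x => ⟨T x.1, hmaps x.1 x.2⟩ with hf
  set κ' : NNReal := ⟨κ, hκ0⟩ with hκ'
  have hcontr : ContractingWith κ' f := by
    constructor
    · exact_mod_cast hκ1
    · refine LipschitzWith.of_dist_le_mul fun x y => ?_
      rw [Subtype.dist_eq, Subtype.dist_eq, dist_eq_norm, dist_eq_norm]
      exact hLip y.1 y.2 x.1 x.2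
  -- fixed points of f correspond to zeros of F in the ball
  have hfix_iff : ∀ x : Metric.closedBall abar r0, f x = x ↔ F x.1 = 0 := by
    intro x
    constructor
    · intro h
      have h1 : T x.1 = x.1 := congrArg Subtype.val h
      have h2 : A (F x.1) = 0 := by
        have := sub_eq_self.mp h1
        exact this
      exact hA (by simpa using h2)
    · intro h
      apply Subtype.ext
      show T x.1 = x.1
      simp [hT, h]
  set afix := ContractingWith.fixedPoint f hcontr with hafixdef
  have hafix : f afix = afix := hcontr.fixedPoint_isFixedPt
  refine ⟨afix.1, ⟨afix.2, (hfix_iff afix).mp hafix⟩, ?_⟩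
  rintro b ⟨hb, hFb⟩
  have hbfix : f ⟨b, hb⟩ = ⟨b, hb⟩ := (hfix_iff ⟨b, hb⟩).mpr hFb
  have := hcontr.fixedPoint_unique' hbfix hafix
  exact congrArg Subtype.val this
end

section
/- Under the hypotheses of the radii polynomial theorem with $p(r_0) < 0$ for some $r_0 > 0$, the Newton-like operator $T(a) = a - AF(a)$ maps the closed ball $\overline{B_{r_0}(\bar a)}$ into the open ball $B_{r_0}(\bar a)$ and is a contraction on $\overline{B_{r_0}(\bar a)}$ with Lipschitz constant $\kappa = Z_0 + Z_1 + Z_2(r_0) r_0 < 1$. -/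
/-- Under the hypotheses of the radii polynomial theorem with `p r0 < 0`, the Newton-like
operator `T a = a - A (F a)` maps the closed ball of radius `r0` about `abar` into the open
ball, and is a contraction on the closed ball with Lipschitz constant
`κ = Z0 + Z1 + Z2.eval r0 * r0 < 1`. -/
theorem newton_operator_contraction
    {X Y : Type*} [NormedAddCommGroup X] [NormedSpace ℝ X] [CompleteSpace X]
    [NormedAddCommGroup Y] [NormedSpace ℝ Y] [CompleteSpace Y]
    (F : X → Y) (DF : X → X →L[ℝ] Y) (hF : ∀ x, HasFDerivAt F (DF x) x)
    (abar : X) (Adag : X →L[ℝ] Y) (A : Y →L[ℝ] X) (hA : Function.Injective A)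
    (Y0 Z0 Z1 : ℝ) (hY0' : 0 ≤ Y0) (hZ0' : 0 ≤ Z0) (hZ1' : 0 ≤ Z1)
    (Z2 : Polynomial ℝ) (hZ2 : ∀ i, 0 ≤ Z2.coeff i)
    (hY0 : ‖A (F abar)‖ ≤ Y0)
    (hZ0 : ‖ContinuousLinearMap.id ℝ X - A.comp Adag‖ ≤ Z0)
    (hZ1 : ‖A.comp (DF abar - Adag)‖ ≤ Z1)
    (hZ2b : ∀ r : ℝ, 0 < r → ∀ b ∈ Metric.closedBall abar r,
      ‖A.comp (DF b - DF abar)‖ ≤ Z2.eval r * r)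
    (r0 : ℝ) (hr0 : 0 < r0)
    (hp : Z2.eval r0 * r0 ^ 2 - (1 - Z0 - Z1) * r0 + Y0 < 0)
    (T : X → X) (hT : ∀ a, T a = a - A (F a)) :
    (∀ a ∈ Metric.closedBall abar r0, T a ∈ Metric.ball abar r0) ∧
    Z0 + Z1 + Z2.eval r0 * r0 < 1 ∧
    (∀ x ∈ Metric.closedBall abar r0, ∀ y ∈ Metric.closedBall abar r0,
      ‖T x - T y‖ ≤ (Z0 + Z1 + Z2.eval r0 * r0) * ‖x - y‖) := by
  have hZ2r : 0 ≤ Z2.eval r0 := by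
    rw [Polynomial.eval_eq_sum_range]
    exact Finset.sum_nonneg fun i _ => mul_nonneg (hZ2 i) (pow_nonneg hr0.le i)
  set κ := Z0 + Z1 + Z2.eval r0 * r0 with hκ
  have hκ0 : 0 ≤ κ := by positivity
  have hkey : κ * r0 + Y0 < r0 := by nlinarith
  have hκ1 : κ < 1 := by nlinarith
  have hDT : ∀ a, HasFDerivAt T (ContinuousLinearMap.id ℝ X - A.comp (DF a)) a := by
    intro a
    have h1 : HasFDerivAt (fun a => A (F a)) (A.comp (DF a)) a :=
      A.hasFDerivAt.comp a (hF a)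
    have h2 := (hasFDerivAt_id a).sub h1
    have hTeq : T = fun a => a - A (F a) := funext hT
    rw [hTeq]
    exact h2
  have hbound : ∀ a ∈ Metric.closedBall abar r0,
      ‖ContinuousLinearMap.id ℝ X - A.comp (DF a)‖ ≤ κ := by
    intro a ha
    have heq : ContinuousLinearMap.id ℝ X - A.comp (DF a)
        = (ContinuousLinearMap.id ℝ X - A.comp Adag) - A.comp (DF abar - Adag)
          - A.comp (DF a - DF abar) := by
      simp only [ContinuousLinearMap.comp_sub]
      abel
    rw [heq]
    calc ‖(ContinuousLinearMap.id ℝ X - A.comp Adag) - A.comp (DF abar - Adag)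
          - A.comp (DF a - DF abar)‖
        ≤ ‖(ContinuousLinearMap.id ℝ X - A.comp Adag) - A.comp (DF abar - Adag)‖
          + ‖A.comp (DF a - DF abar)‖ := norm_sub_le _ _
      _ ≤ ‖ContinuousLinearMap.id ℝ X - A.comp Adag‖ + ‖A.comp (DF abar - Adag)‖
          + ‖A.comp (DF a - DF abar)‖ := by
            gcongr; exact norm_sub_le _ _
      _ ≤ Z0 + Z1 + Z2.eval r0 * r0 :=
            add_le_add (add_le_add hZ0 hZ1) (hZ2b r0 hr0 a ha)
  have hlip : ∀ x ∈ Metric.closedBall abar r0, ∀ y ∈ Metric.closedBall abar r0,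
      ‖T x - T y‖ ≤ κ * ‖x - y‖ := by
    intro x hx y hy
    exact (convex_closedBall abar r0).norm_image_sub_le_of_norm_hasFDerivWithin_le
      (fun z _ => (hDT z).hasFDerivWithinAt) hbound hy hx
  refine ⟨?_, hκ1, hlip⟩
  intro a ha
  have h1 : ‖T a - T abar‖ ≤ κ * ‖a - abar‖ := hlip a ha abar (Metric.mem_closedBall_self hr0.le)
  have h2 : ‖T abar - abar‖ ≤ Y0 := by
    rw [hT abar]
    simpa using hY0
  have h3 : ‖a - abar‖ ≤ r0 := by
    rw [← dist_eq_norm]; exact Metric.mem_closedBall.1 ha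
  rw [Metric.mem_ball, dist_eq_norm]
  calc ‖T a - abar‖ ≤ ‖T a - T abar‖ + ‖T abar - abar‖ := by
        simpa using norm_sub_le_norm_sub_add_norm_sub (T a) (T abar) abar
    _ ≤ κ * r0 + Y0 := add_le_add (h1.trans (by nlinarith)) h2
    _ < r0 := hkey
end
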